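/- Let p > 2, Λ > 0, and define the Talenti bubbles V_t(s) := β·(cosh(α(s−t)))^{−2/(p−2)} with α := ((p−2)/2)·√Λ and β := (pΛ/2)^{1/(p−2)}. There exist constants c > 0, C > 0 and M > 0, depending only on p and Λ, such that whenever t₁, t₂ ∈ ℝ satisfy t₂ − t₁ ≥ M, one has c·e^{√Λ·(t₁−t₂)} ≤ ∫_ℝ V_{t₁}(s)^{p−1}·V_{t₂}'(s) ds ≤ C·e^{√Λ·(t₁−t₂)}. -/

import Mathlib

open MeasureTheory

section helpers
open Real Set MeasureTheory

lemma myabs_sinh_le_cosh (x : ℝ) : |Real.sinh x| ≤ Real.cosh x := by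
  rw [Real.abs_sinh, ← Real.cosh_abs]
  have h := Real.sinh_eq |x|
  have h2 := Real.cosh_eq |x|
  have := Real.exp_pos (-|x|)
  linarith

lemma mycosh_le_exp_abs (x : ℝ) : Real.cosh x ≤ Real.exp |x| := by
  rw [← Real.cosh_abs, Real.cosh_eq]
  have h1 : Real.exp (-|x|) ≤ Real.exp |x| := Real.exp_le_exp.2 (by simp [neg_le_self_iff, abs_nonneg])
  linarith

lemma myexp_abs_le_two_cosh (x : ℝ) : Real.exp |x| ≤ 2 * Real.cosh x := by
  rw [← Real.cosh_abs, Real.cosh_eq]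
  have := (Real.exp_pos (-|x|)).le
  linarith

lemma mycosh_rpow_le {m : ℝ} (hm : 0 ≤ m) (x : ℝ) :
    Real.cosh x ^ (-m : ℝ) ≤ Real.exp (m * Real.log 2 - m * |x|) := by
  rw [Real.rpow_def_of_pos (Real.cosh_pos x)]
  apply Real.exp_le_exp.2
  have hlog : |x| - Real.log 2 ≤ Real.log (Real.cosh x) := by
    rw [← Real.log_exp (|x| - Real.log 2)]
    apply Real.log_le_log (Real.exp_pos _)
    rw [Real.exp_sub, Real.exp_log (by norm_num : (0:ℝ) < 2)]
    linarith [myexp_abs_le_two_cosh x]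
  nlinarith

lemma mycosh_rpow_ge {m x : ℝ} (hm : 0 ≤ m) (hx : 0 ≤ x) :
    Real.exp (-(m * x)) ≤ Real.cosh x ^ (-m : ℝ) := by
  rw [Real.rpow_def_of_pos (Real.cosh_pos x)]
  apply Real.exp_le_exp.2
  have hlog : Real.log (Real.cosh x) ≤ x := by
    have h1 : Real.cosh x ≤ Real.exp x := by
      calc Real.cosh x ≤ Real.exp |x| := mycosh_le_exp_abs x
      _ = Real.exp x := by rw [abs_of_nonneg hx]
    calc Real.log (Real.cosh x) ≤ Real.log (Real.exp x) := Real.log_le_log (Real.cosh_pos x) h1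
    _ = x := Real.log_exp x
  nlinarith

lemma myexp_abs_integrable {a : ℝ} (ha : 0 < a) :
    Integrable fun u : ℝ => Real.exp (-(a * |u|)) := by
  have h1 : IntegrableOn (fun u : ℝ => Real.exp (-(a * |u|))) (Ioi 0) := by
    refine (exp_neg_integrableOn_Ioi 0 ha).congr_fun ?_ measurableSet_Ioi
    intro x hx
    show Real.exp (-a * x) = Real.exp (-(a * |x|))
    rw [abs_of_pos hx]; ring_nf
  have h2 : IntegrableOn (fun u : ℝ => Real.exp (-(a * |u|))) (Iic 0) := by
    rw [← Measure.map_neg_eq_self (volume : Measure ℝ)]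
    have m : MeasurableEmbedding fun x : ℝ => -x := (Homeomorph.neg ℝ).measurableEmbedding
    rw [m.integrableOn_map_iff]
    simp_rw [Function.comp_def, abs_neg, neg_preimage, neg_Iic, neg_zero]
    exact Iff.mpr integrableOn_Ici_iff_integrableOn_Ioi h1
  have := h2.union h1
  rwa [Iic_union_Ioi, integrableOn_univ] at this

lemma myexp_Ioi_integral {a : ℝ} (ha : 0 < a) (d : ℝ) :
    ∫ u in Ioi d, Real.exp (-(a * u)) = Real.exp (-(a * d)) / a := by
  have hder : ∀ x ∈ Ici d, HasDerivAt (fun u => -Real.exp (-(a * u)) / a) (Real.exp (-(a * x))) x := by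
    intro x _
    have h0 : HasDerivAt (fun u : ℝ => -(a * u)) (-a) x := by
      exact ((hasDerivAt_id x).const_mul a).neg.congr_deriv (by simp)
    have h := (h0.exp.neg).div_const a
    exact h.congr_deriv (by field_simp)
  have hint : IntegrableOn (fun x => Real.exp (-(a * x))) (Ioi d) := by
    refine (exp_neg_integrableOn_Ioi d ha).congr_fun (fun x _ => by ring_nf) measurableSet_Ioi
  have htend : Filter.Tendsto (fun u => -Real.exp (-(a * u)) / a) Filter.atTop (nhds 0) := by
    have h1 : Filter.Tendsto (fun u : ℝ => Real.exp (-(a * u))) Filter.atTop (nhds 0) := by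
      have := Real.tendsto_exp_atBot.comp
        (Filter.tendsto_id.const_mul_atTop_of_neg (neg_neg_iff_pos.2 ha))
      simpa [Function.comp_def, neg_mul] using this
    simpa using (h1.neg).div_const a
  have := integral_Ioi_of_hasDerivAt_of_tendsto' hder hint htend
  rw [this]; field_simp; ring

noncomputable def fbb (α q p d u : ℝ) : ℝ :=
  Real.cosh (α * u) ^ (-(q * (p - 1)) : ℝ) *
    (Real.cosh (α * (u - d)) ^ (-q - 1 : ℝ) * (-Real.sinh (α * (u - d))))

lemma fbb_cont (α q p d : ℝ) : Continuous (fbb α q p d) := by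
  apply Continuous.mul
  · exact (Real.continuous_cosh.comp (continuous_const.mul continuous_id)).rpow_const
      (fun x => Or.inl (Real.cosh_pos _).ne')
  · apply Continuous.mul
    · exact (Real.continuous_cosh.comp
        (continuous_const.mul (continuous_id.sub continuous_const))).rpow_const
        (fun x => Or.inl (Real.cosh_pos _).ne')
    · exact (Real.continuous_sinh.comp
        (continuous_const.mul (continuous_id.sub continuous_const))).neg

lemma fbb_abs_le {α q p : ℝ} (hα : 0 < α) (hq : 0 < q) (hp : 2 < p) {d : ℝ} (hd : 0 ≤ d) (u : ℝ) :
    |fbb α q p d u| ≤ Real.exp (q * p * Real.log 2 - q * α * d - q * α * (p - 2) * |u|) := by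
  have c1 : (0:ℝ) < Real.cosh (α * u) ^ (-(q * (p - 1)) : ℝ) :=
    Real.rpow_pos_of_pos (Real.cosh_pos _) _
  have c2 : (0:ℝ) < Real.cosh (α * (u - d)) ^ (-q - 1 : ℝ) :=
    Real.rpow_pos_of_pos (Real.cosh_pos _) _
  have h1 : |fbb α q p d u| = Real.cosh (α*u) ^ (-(q*(p-1)):ℝ) *
      (Real.cosh (α*(u-d)) ^ (-q-1:ℝ) * |Real.sinh (α*(u-d))|) := by
    unfold fbb
    rw [abs_mul, abs_mul, abs_neg, abs_of_pos c1, abs_of_pos c2]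
  have h2 : Real.cosh (α*(u-d)) ^ (-q-1:ℝ) * |Real.sinh (α*(u-d))| ≤
      Real.cosh (α*(u-d)) ^ (-q : ℝ) := by
    have e1 : Real.cosh (α*(u-d)) ^ (-q-1:ℝ) * Real.cosh (α*(u-d)) =
        Real.cosh (α*(u-d)) ^ (-q : ℝ) := by
      rw [← Real.rpow_add_one (Real.cosh_pos _).ne' (-q-1)]
      norm_num
    calc Real.cosh (α*(u-d)) ^ (-q-1:ℝ) * |Real.sinh (α*(u-d))|
        ≤ Real.cosh (α*(u-d)) ^ (-q-1:ℝ) * Real.cosh (α*(u-d)) :=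
          mul_le_mul_of_nonneg_left (myabs_sinh_le_cosh _) c2.le
      _ = _ := e1
  have h3 : Real.cosh (α*(u-d)) ^ (-q : ℝ) ≤ Real.exp (q * Real.log 2 - q * |α*(u-d)|) :=
    mycosh_rpow_le hq.le _
  have h4 : Real.cosh (α*u) ^ (-(q*(p-1)):ℝ) ≤
      Real.exp (q*(p-1) * Real.log 2 - q*(p-1) * |α*u|) :=
    mycosh_rpow_le (by nlinarith) _
  have hsnn : (0:ℝ) ≤ |Real.sinh (α*(u-d))| := abs_nonneg _
  calc |fbb α q p d u|
      ≤ Real.exp (q*(p-1) * Real.log 2 - q*(p-1) * |α*u|) *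
        Real.exp (q * Real.log 2 - q * |α*(u-d)|) := by
        rw [h1]
        exact mul_le_mul h4 (h2.trans h3) (by positivity) (Real.exp_pos _).le
    _ = Real.exp ((q*(p-1) * Real.log 2 - q*(p-1) * |α*u|) +
        (q * Real.log 2 - q * |α*(u-d)|)) := (Real.exp_add _ _).symm
    _ ≤ Real.exp (q * p * Real.log 2 - q * α * d - q * α * (p - 2) * |u|) := by
        apply Real.exp_le_exp.2
        rw [abs_mul, abs_mul, abs_of_pos hα]
        have hud : d - u ≤ |u - d| := by
          rw [abs_sub_comm]; exact le_trans (by linarith [le_abs_self (d-u)]) (le_refl _)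
        have h5 : u ≤ |u| := le_abs_self u
        have h6 : (0:ℝ) ≤ |u| := abs_nonneg u
        nlinarith [mul_pos hq hα]

lemma fbb_nonneg {α q p d u : ℝ} (hα : 0 ≤ α) (hu : u ≤ d) : 0 ≤ fbb α q p d u := by
  have hs : Real.sinh (α * (u - d)) ≤ 0 :=
    Real.sinh_nonpos_iff.2 (mul_nonpos_of_nonneg_of_nonpos hα (by linarith))
  have c1 : (0:ℝ) ≤ Real.cosh (α * u) ^ (-(q * (p - 1)) : ℝ) :=
    (Real.rpow_pos_of_pos (Real.cosh_pos _) _).le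
  have c2 : (0:ℝ) ≤ Real.cosh (α * (u - d)) ^ (-q - 1 : ℝ) :=
    (Real.rpow_pos_of_pos (Real.cosh_pos _) _).le
  exact mul_nonneg c1 (mul_nonneg c2 (by linarith))

lemma fbb_lower {α q p : ℝ} (hα : 0 < α) (hq : 0 < q) (hp : 2 < p) {d u : ℝ}
    (hd : 2 ≤ d) (hu0 : 0 ≤ u) (hu1 : u ≤ 1) :
    Real.cosh α ^ (-(q*(p-1)) : ℝ) *
      ((1 - Real.exp (-(2*α)))/2 * Real.exp (-(q*α*d))) ≤ fbb α q p d u := by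
  set x : ℝ := α * (d - u) with hx
  have hxα : α ≤ x := by nlinarith
  have hx0 : 0 ≤ x := le_trans hα.le hxα
  have hrw : fbb α q p d u = Real.cosh (α*u) ^ (-(q*(p-1)):ℝ) *
      (Real.cosh x ^ (-q-1:ℝ) * Real.sinh x) := by
    unfold fbb
    have : α * (u - d) = -x := by rw [hx]; ring
    rw [this, Real.cosh_neg, Real.sinh_neg, neg_neg]
  rw [hrw]
  -- first factor
  have f1 : Real.cosh α ^ (-(q*(p-1)) : ℝ) ≤ Real.cosh (α*u) ^ (-(q*(p-1)):ℝ) := by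
    apply Real.rpow_le_rpow_of_nonpos (Real.cosh_pos _)
    · exact Real.cosh_le_cosh.2 (by
        rw [abs_mul, abs_of_pos hα, abs_of_nonneg hu0]
        nlinarith)
    · nlinarith
  -- second factor
  have f2 : Real.exp (-((q+1) * x)) ≤ Real.cosh x ^ (-q-1:ℝ) := by
    have := mycosh_rpow_ge (by linarith : (0:ℝ) ≤ q+1) hx0
    have e : (-(q+1) : ℝ) = -q-1 := by ring
    rwa [e] at this
  have f3 : (1 - Real.exp (-(2*α)))/2 * Real.exp x ≤ Real.sinh x := by
    rw [Real.sinh_eq]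
    have e1 : Real.exp (-x) = Real.exp x * Real.exp (-(2*x)) := by
      rw [← Real.exp_add]; ring_nf
    have e2 : Real.exp (-(2*x)) ≤ Real.exp (-(2*α)) := Real.exp_le_exp.2 (by linarith)
    have := Real.exp_pos x
    nlinarith
  have hc0 : (0:ℝ) < (1 - Real.exp (-(2*α)))/2 := by
    have : Real.exp (-(2*α)) < 1 := by
      rw [← Real.exp_zero]; exact Real.exp_lt_exp.2 (by linarith)
    linarith
  have f23 : (1 - Real.exp (-(2*α)))/2 * Real.exp (-(q*α*d)) ≤
      Real.cosh x ^ (-q-1:ℝ) * Real.sinh x := by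
    calc (1 - Real.exp (-(2*α)))/2 * Real.exp (-(q*α*d))
        ≤ (1 - Real.exp (-(2*α)))/2 * Real.exp (-(q*x)) := by
          apply mul_le_mul_of_nonneg_left _ hc0.le
          apply Real.exp_le_exp.2
          have hqx : q * x = q*α*d - q*α*u := by rw [hx]; ring
          have := mul_nonneg (mul_nonneg hq.le hα.le) hu0
          linarith
      _ = Real.exp (-((q+1) * x)) * ((1 - Real.exp (-(2*α)))/2 * Real.exp x) := by
          rw [show (-(q*x) : ℝ) = (-((q+1)*x)) + x by ring, Real.exp_add]; ring
      _ ≤ Real.cosh x ^ (-q-1:ℝ) * Real.sinh x := by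
          apply mul_le_mul f2 f3 (by positivity) (Real.rpow_pos_of_pos (Real.cosh_pos _) _).le
  calc Real.cosh α ^ (-(q*(p-1)) : ℝ) * ((1 - Real.exp (-(2*α)))/2 * Real.exp (-(q*α*d)))
      ≤ Real.cosh (α*u) ^ (-(q*(p-1)):ℝ) * (Real.cosh x ^ (-q-1:ℝ) * Real.sinh x) := by
        apply mul_le_mul f1 f23 (by positivity) (Real.rpow_pos_of_pos (Real.cosh_pos _) _).le
  

section
variable {α q p d : ℝ} (hα : 0 < α) (hq : 0 < q) (hp : 2 < p)

lemma fbb_bound_eq (hd : 0 ≤ d) (u : ℝ) :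
    Real.exp (q * p * Real.log 2 - q * α * d - q * α * (p - 2) * |u|)
      = Real.exp (q * p * Real.log 2 - q * α * d) * Real.exp (-(q * α * (p - 2) * |u|)) := by
  rw [← Real.exp_add]; ring_nf

include hα hq hp in
lemma fbb_integrable (hd : 0 ≤ d) : Integrable (fbb α q p d) := by
  have ha : 0 < q * α * (p - 2) := mul_pos (mul_pos hq hα) (by linarith)
  refine Integrable.mono' (((myexp_abs_integrable ha).const_mul
    (Real.exp (q * p * Real.log 2 - q * α * d)))) (fbb_cont α q p d).aestronglyMeasurable ?_
  refine Filter.Eventually.of_forall fun u => ?_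
  rw [Real.norm_eq_abs]
  calc |fbb α q p d u| ≤ _ := fbb_abs_le hα hq hp hd u
  _ = _ := fbb_bound_eq hd u

include hα hq hp in
lemma fbb_integral_le (hd : 0 ≤ d) :
    ∫ u, fbb α q p d u ≤ (Real.exp (q * p * Real.log 2) *
      ∫ u : ℝ, Real.exp (-(q * α * (p - 2) * |u|))) * Real.exp (-(q * α * d)) := by
  have ha : 0 < q * α * (p - 2) := mul_pos (mul_pos hq hα) (by linarith)
  have h1 : ∫ u, fbb α q p d u ≤ ∫ u : ℝ, Real.exp (q * p * Real.log 2 - q * α * d) *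
      Real.exp (-(q * α * (p - 2) * |u|)) := by
    refine integral_mono (fbb_integrable hα hq hp hd)
      ((myexp_abs_integrable ha).const_mul _) fun u => ?_
    calc fbb α q p d u ≤ |fbb α q p d u| := le_abs_self _
    _ ≤ _ := fbb_abs_le hα hq hp hd u
    _ = _ := fbb_bound_eq hd u
  rw [integral_const_mul] at h1
  calc ∫ u, fbb α q p d u ≤ _ := h1
  _ = (Real.exp (q * p * Real.log 2) * ∫ u : ℝ, Real.exp (-(q * α * (p - 2) * |u|))) *
      Real.exp (-(q * α * d)) := by
    rw [show q * p * Real.log 2 - q * α * d = (q * p * Real.log 2) + (-(q * α * d)) by ring,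
      Real.exp_add]
    ring

include hα hq hp in
lemma fbb_integral_ge (hd : 2 ≤ d) :
    Real.cosh α ^ (-(q*(p-1)) : ℝ) * ((1 - Real.exp (-(2*α)))/2) * Real.exp (-(q*α*d))
      - (Real.exp (q * p * Real.log 2) / (q*α*(p-2))) * Real.exp (-(q*α*(p-2)*d)) *
        Real.exp (-(q*α*d))
      ≤ ∫ u, fbb α q p d u := by
  have ha : 0 < q * α * (p - 2) := mul_pos (mul_pos hq hα) (by linarith)
  have hd0 : (0:ℝ) ≤ d := by linarith
  have hint := fbb_integrable hα hq hp hd0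
  set a := q * α * (p - 2) with ha_def
  -- split
  have hsplit : (∫ u in Iic d, fbb α q p d u) + (∫ u in Ioi d, fbb α q p d u)
      = ∫ u, fbb α q p d u := by
    rw [← setIntegral_union (Iic_disjoint_Ioi le_rfl) measurableSet_Ioi
      hint.integrableOn hint.integrableOn, Iic_union_Ioi, setIntegral_univ]
  -- lower bound on Iic d
  have h1 : Real.cosh α ^ (-(q*(p-1)) : ℝ) * ((1 - Real.exp (-(2*α)))/2) * Real.exp (-(q*α*d))
      ≤ ∫ u in Iic d, fbb α q p d u := by
    have hsub : Icc (0:ℝ) 1 ⊆ Iic d := fun x hx => le_trans hx.2 (by linarith)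
    have hIcc_le : ∫ u in Icc (0:ℝ) 1, fbb α q p d u ≤ ∫ u in Iic d, fbb α q p d u := by
      refine setIntegral_mono_set hint.integrableOn ?_ (HasSubset.Subset.eventuallyLE hsub)
      exact (ae_restrict_iff' measurableSet_Iic).2
        (Filter.Eventually.of_forall fun u hu => fbb_nonneg hα.le hu)
    have hconst := setIntegral_ge_of_const_le_real (μ := volume) (s := Icc (0:ℝ) 1)
      measurableSet_Icc (by simp)
      (fun x hx => fbb_lower hα hq hp hd hx.1 hx.2) hint.integrableOn
    rw [Real.volume_real_Icc] at hconst
    norm_num at hconst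
    calc Real.cosh α ^ (-(q*(p-1)) : ℝ) * ((1 - Real.exp (-(2*α)))/2) * Real.exp (-(q*α*d))
        = Real.cosh α ^ (-(q*(p-1)) : ℝ) * ((1 - Real.exp (-(2*α)))/2 * Real.exp (-(q*α*d))) := by
          ring
      _ ≤ ∫ u in Icc (0:ℝ) 1, fbb α q p d u := hconst
      _ ≤ _ := hIcc_le
  -- lower bound on Ioi d
  have h2 : -((Real.exp (q * p * Real.log 2) / a) * Real.exp (-(a*d)) * Real.exp (-(q*α*d)))
      ≤ ∫ u in Ioi d, fbb α q p d u := by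
    have hb : ∀ u ∈ Ioi d, -(Real.exp (q*p*Real.log 2 - q*α*d) * Real.exp (-(a*u)))
        ≤ fbb α q p d u := by
      intro u hu
      have h := fbb_abs_le hα hq hp hd0 u
      rw [abs_of_pos (lt_of_lt_of_le (by linarith : (0:ℝ) < d) (le_of_lt hu))] at h
      have heq : Real.exp (q*p*Real.log 2 - q*α*d - a*u)
          = Real.exp (q*p*Real.log 2 - q*α*d) * Real.exp (-(a*u)) := by
        rw [← Real.exp_add]; ring_nf
      rw [ha_def] at heq
      rw [heq] at h
      have := neg_abs_le (fbb α q p d u)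
      linarith
    have hintExp : IntegrableOn
        (fun u => Real.exp (q*p*Real.log 2 - q*α*d) * Real.exp (-(a*u))) (Ioi d) := by
      refine Integrable.const_mul ?_ _
      exact (exp_neg_integrableOn_Ioi d ha).congr_fun
        (fun x _ => by show Real.exp (-a * x) = Real.exp (-(a * x)); ring_nf) measurableSet_Ioi
    have hmono := setIntegral_mono_on hintExp.neg hint.integrableOn measurableSet_Ioi hb
    have hval : ∫ u in Ioi d, -(Real.exp (q*p*Real.log 2 - q*α*d) * Real.exp (-(a*u)))
        = -((Real.exp (q * p * Real.log 2) / a) * Real.exp (-(a*d)) * Real.exp (-(q*α*d))) := by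
      rw [integral_neg, integral_const_mul, myexp_Ioi_integral ha d,
        show q*p*Real.log 2 - q*α*d = (q*p*Real.log 2) + (-(q*α*d)) by ring, Real.exp_add]
      ring
    simp only [Pi.neg_apply] at hmono
    rw [hval] at hmono
    exact hmono
  linarith
end

end helpers

section main
open Real Set MeasureTheory

/-- Lemma 2.6: there are constants `c, C, M > 0`, depending only on `p` and `Λ`,
such that whenever `t₂ - t₁ ≥ M`,
`∫ V_{t₁}^{p-1} V_{t₂}' ≈ e^{√Λ (t₁ - t₂)}`. -/
theorem stmt_9 (p Λ α β : ℝ) (hp : 2 < p) (hΛ : 0 < Λ)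
    (hα : α = (p - 2) / 2 * Real.sqrt Λ) (hβ : β = (p * Λ / 2) ^ ((1 : ℝ) / (p - 2)))
    (V : ℝ → ℝ → ℝ)
    (hV : ∀ t s, V t s = β * Real.cosh (α * (s - t)) ^ (-2 / (p - 2) : ℝ)) :
    ∃ c C M : ℝ, 0 < c ∧ 0 < C ∧ 0 < M ∧
      ∀ t₁ t₂ : ℝ, M ≤ t₂ - t₁ →
        c * Real.exp (Real.sqrt Λ * (t₁ - t₂))
          ≤ (∫ s : ℝ, V t₁ s ^ (p - 1) * deriv (V t₂) s) ∧
        (∫ s : ℝ, V t₁ s ^ (p - 1) * deriv (V t₂) s)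
          ≤ C * Real.exp (Real.sqrt Λ * (t₁ - t₂)) := by
  have hp2 : (0:ℝ) < p - 2 := by linarith
  have hsq0 : 0 < Real.sqrt Λ := Real.sqrt_pos.2 hΛ
  set q : ℝ := 2 / (p - 2) with hqdef
  have hq0 : 0 < q := by positivity
  have hα0 : 0 < α := by rw [hα]; positivity
  have hβ0 : 0 < β := by rw [hβ]; exact Real.rpow_pos_of_pos (by positivity) _
  have hqα : q * α = Real.sqrt Λ := by
    rw [hα, hqdef]; field_simp
  have ha : 0 < q * α * (p - 2) := mul_pos (mul_pos hq0 hα0) hp2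
  -- derivative of the bubble
  have hderiv : ∀ t s : ℝ, deriv (V t) s
      = β * (α * q) * (Real.cosh (α*(s-t)) ^ (-q-1:ℝ) * (-Real.sinh (α*(s-t)))) := by
    intro t s
    have hVt : V t = fun s' => β * Real.cosh (α*(s'-t)) ^ (-q : ℝ) := by
      funext s'
      rw [hV]
      congr 1
      rw [hqdef, neg_div]
    rw [hVt]
    have h1 : HasDerivAt (fun s' : ℝ => α*(s'-t)) α s := by
      simpa using ((hasDerivAt_id s).sub_const t).const_mul α
    have h2 : HasDerivAt (fun s' : ℝ => Real.cosh (α*(s'-t))) (Real.sinh (α*(s-t)) * α) s :=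
      h1.cosh
    have h3 : HasDerivAt (fun y : ℝ => y ^ (-q : ℝ))
        (-q * Real.cosh (α*(s-t)) ^ (-q-1:ℝ)) (Real.cosh (α*(s-t))) := by
      have := Real.hasDerivAt_rpow_const (x := Real.cosh (α*(s-t))) (p := -q)
        (Or.inl (Real.cosh_pos _).ne')
      convert this using 2
    have h4 : HasDerivAt (fun s' : ℝ => β * Real.cosh (α*(s'-t)) ^ (-q : ℝ))
        (β * (-q * Real.cosh (α*(s-t)) ^ (-q-1:ℝ) * (Real.sinh (α*(s-t)) * α))) s := by
      simpa [Function.comp_def] using (h3.comp s h2).const_mul β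
    rw [h4.deriv]
    ring
  -- constants
  set m₁ : ℝ := Real.cosh α ^ (-(q*(p-1)) : ℝ) with hm₁
  set c₀ : ℝ := (1 - Real.exp (-(2*α)))/2 with hc₀
  set B' : ℝ := ∫ u : ℝ, Real.exp (-(q*α*(p-2) * |u|)) with hB'
  set K : ℝ := Real.exp (q*p*Real.log 2) / (q*α*(p-2)) with hK
  set A : ℝ := β ^ (p-1:ℝ) * β * (α * q) with hA
  have hm₁0 : 0 < m₁ := Real.rpow_pos_of_pos (Real.cosh_pos _) _
  have hc₀0 : 0 < c₀ := by
    have : Real.exp (-(2*α)) < 1 := by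
      rw [← Real.exp_zero]; exact Real.exp_lt_exp.2 (by linarith)
    rw [hc₀]; linarith
  have hK0 : 0 < K := by rw [hK]; positivity
  have hB'0 : 0 < B' := by
    rw [hB']
    refine (integral_pos_iff_support_of_nonneg
      (fun u => (Real.exp_pos _).le) (myexp_abs_integrable ha)).2 ?_
    have hsupp : Function.support (fun u : ℝ => Real.exp (-(q*α*(p-2) * |u|))) = univ := by
      ext x; simp [Function.mem_support, Real.exp_ne_zero]
    rw [hsupp]
    simp
  have hA0 : 0 < A := by
    rw [hA]
    have := Real.rpow_pos_of_pos hβ0 (p-1)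
    positivity
  refine ⟨A * (m₁ * c₀ / 2), A * (Real.exp (q*p*Real.log 2) * B'),
    max 2 (Real.log (2*K/(m₁*c₀)) / (q*α*(p-2))), by positivity, by positivity,
    lt_of_lt_of_le (by norm_num) (le_max_left _ _), ?_⟩
  intro t₁ t₂ hM
  set d : ℝ := t₂ - t₁ with hd
  have hd2 : 2 ≤ d := le_trans (le_max_left _ _) hM
  have hdM : Real.log (2*K/(m₁*c₀)) / (q*α*(p-2)) ≤ d := le_trans (le_max_right _ _) hM
  -- the exponential
  have hexp : Real.exp (Real.sqrt Λ * (t₁ - t₂)) = Real.exp (-(q*α*d)) := by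
    congr 1
    rw [← hqα, hd]; ring
  -- integral identity
  have hid : (∫ s : ℝ, V t₁ s ^ (p-1) * deriv (V t₂) s) = A * ∫ u, fbb α q p d u := by
    have hpt : ∀ s : ℝ, V t₁ s ^ (p-1) * deriv (V t₂) s = A * fbb α q p d (s - t₁) := by
      intro s
      rw [hV, hderiv]
      have e1 : (β * Real.cosh (α*(s-t₁)) ^ (-2/(p-2) : ℝ)) ^ (p-1)
          = β ^ (p-1:ℝ) * Real.cosh (α*(s-t₁)) ^ (-(q*(p-1)) : ℝ) := by
        rw [Real.mul_rpow hβ0.le (Real.rpow_pos_of_pos (Real.cosh_pos _) _).le,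
          ← Real.rpow_mul (Real.cosh_pos _).le]
        congr 1
        rw [hqdef]; ring
      rw [e1]
      unfold fbb
      rw [show α * (s - t₁ - d) = α * (s - t₂) by rw [hd]; ring]
      rw [hA]; ring
    simp only [hpt]
    rw [integral_const_mul, integral_sub_right_eq_self (fbb α q p d) t₁]
  have hub := fbb_integral_le hα0 hq0 hp (by linarith : (0:ℝ) ≤ d)
  have hlb := fbb_integral_ge hα0 hq0 hp hd2
  have hKd : K * Real.exp (-(q*α*(p-2)*d)) ≤ m₁ * c₀ / 2 := by
    have hx : (0:ℝ) < 2*K/(m₁*c₀) := by positivity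
    have h1 : Real.exp (-(q*α*(p-2)*d)) ≤ m₁*c₀/(2*K) := by
      have h2 : Real.log (2*K/(m₁*c₀)) ≤ q*α*(p-2)*d := by
        rw [div_le_iff₀ ha] at hdM
        linarith
      calc Real.exp (-(q*α*(p-2)*d)) ≤ Real.exp (-Real.log (2*K/(m₁*c₀))) :=
        Real.exp_le_exp.2 (by linarith)
      _ = m₁*c₀/(2*K) := by
        rw [Real.exp_neg, Real.exp_log hx, inv_div]
    calc K * Real.exp (-(q*α*(p-2)*d)) ≤ K * (m₁*c₀/(2*K)) :=
      mul_le_mul_of_nonneg_left h1 hK0.le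
    _ = m₁ * c₀ / 2 := by field_simp
  constructor
  · rw [hid, hexp]
    have h5 : m₁ * c₀ / 2 * Real.exp (-(q*α*d)) ≤ ∫ u, fbb α q p d u := by
      have h6 := mul_le_mul_of_nonneg_right hKd (Real.exp_pos (-(q*α*d))).le
      rw [hK] at h6
      rw [hm₁, hc₀] at h6 ⊢
      linarith [hlb]
    calc A * (m₁ * c₀ / 2) * Real.exp (-(q*α*d))
        = A * (m₁ * c₀ / 2 * Real.exp (-(q*α*d))) := by ring
    _ ≤ A * ∫ u, fbb α q p d u := mul_le_mul_of_nonneg_left h5 hA0.le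
  · rw [hid, hexp]
    calc A * ∫ u, fbb α q p d u
        ≤ A * ((Real.exp (q*p*Real.log 2) * B') * Real.exp (-(q*α*d))) :=
          mul_le_mul_of_nonneg_left hub hA0.le
    _ = A * (Real.exp (q*p*Real.log 2) * B') * Real.exp (-(q*α*d)) := by ring

end main
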